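/- The range of the function φ(x1,x2) := (1/3)(cos x1 + cos x2 + cos(x1−x2)) over ℝ² is the interval [−1/2, 1]. -/
import Mathlib


open Real

noncomputable def hexφ (x1 x2 : ℝ) : ℝ :=
  (1/3) * (Real.cos x1 + Real.cos x2 + Real.cos (x1 - x2))

theorem hexφ_range :
    Set.range (fun p : ℝ × ℝ => hexφ p.1 p.2) = Set.Icc (-(1/2) : ℝ) 1 := by
  ext y
  simp only [Set.mem_range, Set.mem_Icc]
  constructor
  · rintro ⟨⟨x1, x2⟩, rfl⟩
    simp only [hexφ]
    constructor
    · nlinarith [sq_nonneg (Real.sin x1 + Real.sin x2),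
        sq_nonneg (Real.cos x1 + Real.cos x2 + 1),
        Real.sin_sq_add_cos_sq x1, Real.sin_sq_add_cos_sq x2,
        Real.cos_sub x1 x2]
    · nlinarith [Real.cos_le_one x1, Real.cos_le_one x2, Real.cos_le_one (x1 - x2)]
  · intro hy
    set f : ℝ → ℝ := fun t => hexφ t (-t) with hf
    have hcont : ContinuousOn f (Set.uIcc (2 * π / 3) 0) := by
      apply Continuous.continuousOn
      unfold f
      unfold hexφ
      continuity
    have hf0 : f 0 = 1 := by
      simp [hf, hexφ]
      norm_num
    have hf1 : f (2 * π / 3) = -(1/2) := by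
      have h1 : Real.cos (2 * π / 3) = -(1/2) := by
        have : (2 : ℝ) * π / 3 = π - π / 3 := by ring
        rw [this, Real.cos_pi_sub, Real.cos_pi_div_three]
      have h2 : Real.cos (2 * π / 3 - -(2 * π / 3)) = -(1/2) := by
        have : (2 : ℝ) * π / 3 - -(2 * π / 3) = π + π / 3 := by ring
        rw [this, Real.cos_add, Real.cos_pi, Real.sin_pi, Real.cos_pi_div_three]
        norm_num
      have h3 : Real.cos (-(2 * π / 3)) = -(1/2) := by rw [Real.cos_neg]; exact h1
      show (1/3) * (Real.cos (2 * π / 3) + Real.cos (-(2 * π / 3)) +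
        Real.cos (2 * π / 3 - -(2 * π / 3))) = -(1/2)
      rw [h1, h2, h3]; norm_num
    have hsub := intermediate_value_uIcc hcont
    rw [hf1, hf0] at hsub
    have hy' : y ∈ Set.uIcc (-(1/2) : ℝ) 1 := by
      rw [Set.uIcc_of_le (by norm_num)]
      exact hy
    obtain ⟨t, _, ht⟩ := hsub hy'
    exact ⟨(t, -t), ht⟩
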